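/- Consider the modification of Algorithm 1 in which an output that is a heavy directed edge (v,w) is additionally accepted only with probability d(v)/(2·d_ℓ(v)) (and Fail is output otherwise); this acceptance probability is well defined and at most 3/4 since d_ℓ(v) ≥ (2/3)·d(v) for every heavy v when θ = ⌈√(6m)⌉. Then every directed edge of G, light or heavy, is output with probability exactly 1/(3nθ). -/

import Mathlib

open scoped ENNReal

/-- **Algorithm 1** of Eden–Rosenbaum / Tětek–Thorup, as a probability mass function on
`Option (V × V)`: draw `u` uniformly from `V`, draw `j` uniformly from `{0, …, θ−1}`,
and draw `B ∈ {0,1}` with `P(B = 1) = 1/3`, independently; if `d(u) > θ` or `j ≥ d(u)`,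
output `none` (Fail); otherwise set `v = nbr u j`; if `B = 1`, output the directed edge
`(u, v)`; if `B = 0` and `v` is heavy (`d(v) > θ`), draw `w` uniformly from the neighbors
of `v` and output `(v, w)`; in all other cases output `none`. -/
noncomputable def alg1 {V : Type*} [Fintype V] [DecidableEq V] [Nonempty V]
    (G : SimpleGraph V) [DecidableRel G.Adj] (θ : ℕ) (hθ : 0 < θ)
    (nbr : V → ℕ → V) : PMF (Option (V × V)) :=
  (PMF.uniformOfFintype V).bind fun u =>
    (PMF.uniformOfFinset (Finset.range θ) (Finset.nonempty_range_iff.mpr hθ.ne')).bind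
      fun j =>
        (PMF.bernoulli (1 / 3) (by rw [← NNReal.coe_le_coe]; norm_num)).bind fun B =>
          if θ < G.degree u ∨ G.degree u ≤ j then PMF.pure none
          else
            if B then PMF.pure (some (u, nbr u j))
            else
              if h : θ < G.degree (nbr u j) then
                (PMF.uniformOfFinset (G.neighborFinset (nbr u j))
                  (Finset.card_pos.mp (Nat.lt_of_le_of_lt (Nat.zero_le θ) h))).bind
                  fun w => PMF.pure (some (nbr u j, w))
              else PMF.pure none

/-- A Bernoulli coin with parameter `p`; when `p ≤ 1` this is exactly `PMF.bernoulli p`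
(the value for `p > 1` is irrelevant: in our use the parameter is at most `3/4`). -/
noncomputable def bern' (p : ℝ≥0∞) : PMF Bool :=
  if h : p ≤ 1 then PMF.bernoulli p.toNNReal
    (by simpa using ENNReal.toNNReal_mono ENNReal.one_ne_top h) else PMF.pure true

/-- **Algorithm 1 with rejection for heavy edges**: run Algorithm 1; if the output is a
heavy directed edge `(v, w)` (i.e., `d(v) > θ`), additionally accept it only with
probability `d(v)/(2·d_ℓ(v))`, outputting `none` (Fail) otherwise. -/
noncomputable def alg1Rejected {V : Type*} [Fintype V] [DecidableEq V] [Nonempty V]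
    (G : SimpleGraph V) [DecidableRel G.Adj] (θ : ℕ) (hθ : 0 < θ)
    (nbr : V → ℕ → V) : PMF (Option (V × V)) :=
  (alg1 G θ hθ nbr).bind fun o =>
    match o with
    | none => PMF.pure none
    | some (v, w) =>
        if θ < G.degree v then
          (bern' ((G.degree v : ℝ≥0∞)
              / (2 * (((G.neighborFinset v).filter fun x => G.degree x ≤ θ).card : ℝ≥0∞)))).bind
            fun b => if b then PMF.pure (some (v, w)) else PMF.pure none
        else PMF.pure (some (v, w))



section aux
variable {V : Type*} [Fintype V] [DecidableEq V] [Nonempty V]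
  (G : SimpleGraph V) [DecidableRel G.Adj]

omit [Nonempty V] in
lemma count_sum' (θ : ℕ) (nbr : V → ℕ → V) (u : V)
    (hu : Set.BijOn (nbr u) (Set.Iio (G.degree u)) (G.neighborSet u))
    (t : V) (c : ℝ≥0∞) :
    ∑ j ∈ Finset.range θ,
        (if θ < G.degree u ∨ G.degree u ≤ j then 0
          else if nbr u j = t then c else 0)
      = if G.degree u ≤ θ ∧ G.Adj u t then c else 0 := by
  by_cases hd : G.degree u ≤ θ
  · have h1 : ∀ j ∈ Finset.range θ,
        (if θ < G.degree u ∨ G.degree u ≤ j then 0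
          else if nbr u j = t then c else 0)
        = (if j ∈ Finset.range (G.degree u) then (if nbr u j = t then c else 0) else 0) := by
      intro j hj
      by_cases hjd : j < G.degree u
      · simp [Finset.mem_range, hjd, not_lt.mpr hd, Nat.not_le.mpr hjd]
      · simp [Finset.mem_range, hjd, Nat.le_of_not_lt hjd]
    rw [Finset.sum_congr rfl h1, Finset.sum_ite_mem,
      Finset.inter_eq_right.mpr (Finset.range_subset_range.mpr hd)]
    by_cases hadj : G.Adj u t
    · rw [← Finset.sum_filter]
      have ht : t ∈ G.neighborSet u := by simpa using hadj
      obtain ⟨j0, hj0, hj0t⟩ := hu.surjOn ht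
      have hfil : (Finset.range (G.degree u)).filter (fun j => nbr u j = t) = {j0} := by
        ext j
        simp only [Finset.mem_filter, Finset.mem_range, Finset.mem_singleton]
        constructor
        · rintro ⟨hjr, hjt⟩
          exact hu.injOn hjr hj0 (hjt.trans hj0t.symm)
        · rintro rfl
          exact ⟨hj0, hj0t⟩
      rw [hfil, Finset.sum_singleton, if_pos ⟨hd, hadj⟩]
    · rw [if_neg (fun h => hadj h.2)]
      refine Finset.sum_eq_zero fun j hj => ?_
      rw [if_neg]
      intro hjt
      exact hadj (by simpa [hjt] using hu.mapsTo (Finset.mem_range.mp hj))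
  · rw [if_neg (fun h => hd h.1)]
    refine Finset.sum_eq_zero fun j hj => ?_
    rw [if_pos (Or.inl (not_le.mp hd))]

omit [Nonempty V] in
lemma inner_apply' (θ : ℕ) (nbr : V → ℕ → V) (u : V) (j : ℕ) (a b : V) (hab : G.Adj a b)
    (h3 : (1/3 : NNReal) ≤ 1) :
    ((PMF.bernoulli (1/3) h3).bind fun B =>
        if θ < G.degree u ∨ G.degree u ≤ j then PMF.pure none
        else
          if B then PMF.pure (some (u, nbr u j))
          else
            if h : θ < G.degree (nbr u j) then
              (PMF.uniformOfFinset (G.neighborFinset (nbr u j))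
                (Finset.card_pos.mp (Nat.lt_of_le_of_lt (Nat.zero_le θ) h))).bind
                fun w => PMF.pure (some (nbr u j, w))
            else PMF.pure none) (some (a, b))
      = (1/3) * (if θ < G.degree u ∨ G.degree u ≤ j then 0
          else if u = a ∧ nbr u j = b then (1 : ℝ≥0∞) else 0)
        + (2/3) * (if θ < G.degree u ∨ G.degree u ≤ j then 0
            else if nbr u j = a then
              (if θ < G.degree a then (G.degree a : ℝ≥0∞)⁻¹ else 0) else 0) := by
  have h23 : (1 : ℝ≥0∞) - 1/3 = 2/3 := by
    refine ENNReal.sub_eq_of_eq_add (by norm_num) ?_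
    rw [ENNReal.div_add_div_same]
    norm_num
    exact (ENNReal.div_self (by norm_num) (by norm_num)).symm
  have h13 : ((1/3 : NNReal) : ℝ≥0∞) = 1/3 := by
    rw [ENNReal.coe_div (by norm_num)]; simp
  have h23' : ((1 - 1/3 : NNReal) : ℝ≥0∞) = 2/3 := by
    rw [ENNReal.coe_sub, h13, ENNReal.coe_one, h23]
  rw [PMF.bind_apply, tsum_bool]
  simp only [PMF.bernoulli_apply, Bool.cond_false, Bool.cond_true, h23, h13, h23',
    Bool.false_eq_true, if_false, if_true]
  by_cases hg : θ < G.degree u ∨ G.degree u ≤ j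
  · simp [hg]
  · simp only [if_neg hg]
    rw [add_comm]
    have e1 : (PMF.pure (some (u, nbr u j)) : PMF (Option (V × V))) (some (a, b))
        = (if u = a ∧ nbr u j = b then (1 : ℝ≥0∞) else 0) := by
      rw [PMF.pure_apply]
      by_cases h : u = a ∧ nbr u j = b
      · obtain ⟨rfl, rfl⟩ := h
        simp
      · rw [if_neg (fun hs => h (by simpa [eq_comm, and_comm] using
          (Prod.mk.injEq _ _ _ _).mp (Option.some.injEq _ _ |>.mp hs))), if_neg h]
    have e2 : ((if h : θ < G.degree (nbr u j) then
          (PMF.uniformOfFinset (G.neighborFinset (nbr u j))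
            (Finset.card_pos.mp (Nat.lt_of_le_of_lt (Nat.zero_le θ) h))).bind
            fun w => PMF.pure (some (nbr u j, w))
        else PMF.pure none) : PMF (Option (V × V))) (some (a, b))
        = (if nbr u j = a then
            (if θ < G.degree a then (G.degree a : ℝ≥0∞)⁻¹ else 0) else 0) := by
      by_cases hh : θ < G.degree (nbr u j)
      · rw [dif_pos hh, PMF.bind_apply]
        have hz : ∀ w : V, w ≠ b →
            (PMF.uniformOfFinset (G.neighborFinset (nbr u j))
              (Finset.card_pos.mp (Nat.lt_of_le_of_lt (Nat.zero_le θ) hh))) w *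
              (PMF.pure (some (nbr u j, w))) (some (a, b)) = 0 := by
          intro w hw
          rw [PMF.pure_apply, if_neg, mul_zero]
          simp only [Option.some.injEq, Prod.mk.injEq]
          rintro ⟨-, h⟩
          exact hw h.symm
        rw [tsum_eq_single b hz, PMF.uniformOfFinset_apply, PMF.pure_apply]
        by_cases hva : nbr u j = a
        · rw [hva]
          have : θ < G.degree a := hva ▸ hh
          simp [SimpleGraph.mem_neighborFinset, hab, this]
        · rw [if_neg hva,
            if_neg (show ¬(some (a,b) = some (nbr u j, b)) by
              simp only [Option.some.injEq, Prod.mk.injEq]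
              rintro ⟨h, -⟩
              exact hva h.symm),
            mul_zero]
      · rw [dif_neg hh, PMF.pure_apply, if_neg (by simp)]
        by_cases hva : nbr u j = a
        · rw [if_pos hva, if_neg (hva ▸ hh)]
        · rw [if_neg hva]
    rw [e1, e2]

lemma alg1_apply_adj' (θ : ℕ) (hθ : 0 < θ) (nbr : V → ℕ → V)
    (hnbr : ∀ u : V, Set.BijOn (nbr u) (Set.Iio (G.degree u)) (G.neighborSet u))
    (a b : V) (hab : G.Adj a b) :
    alg1 G θ hθ nbr (some (a, b)) =
      if G.degree a ≤ θ then
        (Fintype.card V : ℝ≥0∞)⁻¹ * (θ : ℝ≥0∞)⁻¹ * (1/3)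
      else
        (Fintype.card V : ℝ≥0∞)⁻¹ * (θ : ℝ≥0∞)⁻¹ * (2/3) * (G.degree a : ℝ≥0∞)⁻¹ *
          (((G.neighborFinset a).filter fun x => G.degree x ≤ θ).card : ℝ≥0∞) := by
  rw [alg1, PMF.bind_apply, tsum_fintype]
  have hPu : ∀ u : V,
      ((PMF.uniformOfFinset (Finset.range θ) (Finset.nonempty_range_iff.mpr hθ.ne')).bind
        fun j =>
          (PMF.bernoulli (1 / 3) (by rw [← NNReal.coe_le_coe]; norm_num)).bind fun B =>
            if θ < G.degree u ∨ G.degree u ≤ j then PMF.pure none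
            else
              if B then PMF.pure (some (u, nbr u j))
              else
                if h : θ < G.degree (nbr u j) then
                  (PMF.uniformOfFinset (G.neighborFinset (nbr u j))
                    (Finset.card_pos.mp (Nat.lt_of_le_of_lt (Nat.zero_le θ) h))).bind
                    fun w => PMF.pure (some (nbr u j, w))
                else PMF.pure none) (some (a, b))
      = (θ : ℝ≥0∞)⁻¹ *
          ((1/3) * (if u = a ∧ G.degree a ≤ θ then (1:ℝ≥0∞) else 0)
            + (2/3) * (if G.degree u ≤ θ ∧ G.Adj u a then
                (if θ < G.degree a then (G.degree a : ℝ≥0∞)⁻¹ else 0) else 0)) := by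
    intro u
    rw [PMF.bind_apply]
    rw [tsum_eq_sum (s := Finset.range θ)
      (fun j hj => by rw [PMF.uniformOfFinset_apply, if_neg hj, zero_mul])]
    rw [Finset.sum_congr rfl (fun j hj => by
      rw [PMF.uniformOfFinset_apply, if_pos hj, Finset.card_range,
        inner_apply' G θ nbr u j a b hab (by rw [← NNReal.coe_le_coe]; norm_num)])]
    rw [← Finset.mul_sum, Finset.sum_add_distrib, ← Finset.mul_sum, ← Finset.mul_sum]
    have hA : (∑ j ∈ Finset.range θ, if θ < G.degree u ∨ G.degree u ≤ j then 0
          else if u = a ∧ nbr u j = b then (1:ℝ≥0∞) else 0)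
        = (if u = a ∧ G.degree a ≤ θ then (1:ℝ≥0∞) else 0) := by
      by_cases hua : u = a
      · subst hua
        have hj : ∀ j : ℕ, (if θ < G.degree u ∨ G.degree u ≤ j then 0
            else if u = u ∧ nbr u j = b then (1:ℝ≥0∞) else 0)
            = (if θ < G.degree u ∨ G.degree u ≤ j then 0
              else if nbr u j = b then (1:ℝ≥0∞) else 0) := fun j => by
          simp only [true_and]
        rw [Finset.sum_congr rfl (fun j _ => hj j), count_sum' G θ nbr u (hnbr u) b 1]
        by_cases hd : G.degree u ≤ θ
        · rw [if_pos ⟨hd, hab⟩, if_pos ⟨rfl, hd⟩]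
        · rw [if_neg (fun h => hd h.1), if_neg (fun h => hd h.2)]
      · rw [if_neg (fun h => hua h.1)]
        refine Finset.sum_eq_zero fun j _ => ?_
        simp [hua]
    rw [hA, count_sum' G θ nbr u (hnbr u) a _]
  rw [Finset.sum_congr rfl (fun u _ => by rw [PMF.uniformOfFintype_apply, hPu u])]
  by_cases hda : G.degree a ≤ θ
  · rw [if_pos hda]
    simp only [hda, and_true, not_lt.mpr hda, if_false, ite_self, mul_zero, add_zero,
      mul_ite, mul_one, Finset.sum_ite_eq', Finset.mem_univ, if_true]
    ring
  · rw [if_neg hda]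
    have hlt := not_le.mp hda
    simp only [hda, and_false, if_false, mul_zero, zero_add, if_pos hlt, mul_ite, mul_one]
    rw [← Finset.sum_filter, Finset.sum_const, nsmul_eq_mul]
    have hcard : (Finset.univ.filter fun u => G.degree u ≤ θ ∧ G.Adj u a)
        = (G.neighborFinset a).filter fun x => G.degree x ≤ θ := by
      ext x
      simp [SimpleGraph.mem_neighborFinset, and_comm, G.adj_comm]
    rw [hcard]
    ring

omit [Nonempty V] in
lemma light_bound' (θ : ℕ) (hθ2 : 6 * G.edgeFinset.card ≤ θ * θ) (v : V)
    (hv : θ < G.degree v) :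
    2 * G.degree v < 3 * ((G.neighborFinset v).filter fun x => G.degree x ≤ θ).card := by
  classical
  set H := Finset.univ.filter (fun x : V => θ < G.degree x) with hH
  have hvH : v ∈ H := by simp [hH, hv]
  have h1 : H.card * (θ+1) ≤ ∑ x ∈ H, G.degree x := by
    simpa [mul_comm] using Finset.card_nsmul_le_sum H (fun x => G.degree x) (θ+1)
      (fun x hx => by simp only [hH, Finset.mem_filter] at hx; exact hx.2)
  have h2 : ∑ x ∈ H, G.degree x ≤ 2 * G.edgeFinset.card := by
    rw [← SimpleGraph.sum_degrees_eq_twice_card_edges]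
    exact Finset.sum_le_sum_of_subset (Finset.subset_univ H)
  have hc : 1 ≤ H.card := Finset.card_pos.mpr ⟨v, hvH⟩
  have h3 : 3 * H.card * θ < θ * θ := by
    have ha : 3 * (H.card * (θ+1)) ≤ θ * θ := by
      calc 3 * (H.card * (θ+1)) ≤ 3 * (2 * G.edgeFinset.card) :=
            Nat.mul_le_mul_left 3 (h1.trans h2)
        _ = 6 * G.edgeFinset.card := by ring
        _ ≤ θ * θ := hθ2
    have he : 3 * (H.card * (θ+1)) = 3 * H.card * θ + 3 * H.card := by ring
    have hpos : 0 < 3 * H.card := by omega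
    omega
  have h4 : 3 * H.card < θ := Nat.lt_of_mul_lt_mul_right h3
  have h5 : ((G.neighborFinset v).filter fun x => ¬ G.degree x ≤ θ).card ≤ H.card := by
    apply Finset.card_le_card
    intro x hx
    simp only [Finset.mem_filter, not_le] at hx
    simp [hH, hx.2]
  have h6 := Finset.card_filter_add_card_filter_not
    (s := G.neighborFinset v) (fun x => G.degree x ≤ θ)
  rw [SimpleGraph.card_neighborFinset_eq_degree] at h6
  omega
end aux

/-- With `θ = ⌈√(6m)⌉`, the acceptance probability `d(v)/(2·d_ℓ(v))` is
well defined and at most `3/4` for every heavy vertex `v` (since `d_ℓ(v) ≥ (2/3)·d(v)`),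
and the modified algorithm outputs every directed edge of `G`, light or heavy, with
probability exactly `1/(3nθ)`. -/
theorem alg1Rejected_uniform {V : Type*} [Fintype V] [DecidableEq V] [Nonempty V]
    (G : SimpleGraph V) [DecidableRel G.Adj]
    (hm : 1 ≤ G.edgeFinset.card)
    (θ : ℕ) (hθ : θ = ⌈Real.sqrt (6 * (G.edgeFinset.card : ℝ))⌉₊)
    (nbr : V → ℕ → V)
    (hnbr : ∀ u : V, Set.BijOn (nbr u) (Set.Iio (G.degree u)) (G.neighborSet u)) :
    (∀ v : V, θ < G.degree v →
        (G.degree v : ℝ≥0∞)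
            / (2 * (((G.neighborFinset v).filter fun x => G.degree x ≤ θ).card : ℝ≥0∞))
          ≤ 3 / 4) ∧
    (∀ a b : V, G.Adj a b →
        alg1Rejected G θ
          (by subst hθ
              refine Nat.ceil_pos.mpr (Real.sqrt_pos.mpr ?_)
              exact_mod_cast Nat.mul_pos (by norm_num) hm)
          nbr (some (a, b))
          = 1 / (3 * (Fintype.card V : ℝ≥0∞) * (θ : ℝ≥0∞))) := by
  have hθpos : 0 < θ := by
    subst hθ
    refine Nat.ceil_pos.mpr (Real.sqrt_pos.mpr ?_)
    exact_mod_cast Nat.mul_pos (by norm_num) hm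
  have hθ2 : 6 * G.edgeFinset.card ≤ θ * θ := by
    have h1 : Real.sqrt (6 * (G.edgeFinset.card : ℝ)) ≤ (θ : ℝ) := by
      rw [hθ]; exact Nat.le_ceil _
    have h2 : (6 * (G.edgeFinset.card : ℝ)) ≤ (θ : ℝ) * (θ : ℝ) := by
      have h0 : (0:ℝ) ≤ 6 * (G.edgeFinset.card : ℝ) := by positivity
      calc (6 * (G.edgeFinset.card : ℝ))
          = Real.sqrt (6 * (G.edgeFinset.card : ℝ)) * Real.sqrt (6 * (G.edgeFinset.card : ℝ)) :=
            (Real.mul_self_sqrt h0).symm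
        _ ≤ (θ : ℝ) * (θ : ℝ) :=
            mul_le_mul h1 h1 (Real.sqrt_nonneg _) (by positivity)
    exact_mod_cast h2
  have hbound : ∀ v : V, θ < G.degree v →
      (G.degree v : ℝ≥0∞)
          / (2 * (((G.neighborFinset v).filter fun x => G.degree x ≤ θ).card : ℝ≥0∞))
        ≤ 3 / 4 := by
    intro v hv
    have hlb := light_bound' G θ hθ2 v hv
    set L := ((G.neighborFinset v).filter fun x => G.degree x ≤ θ).card with hL
    have hLne : L ≠ 0 := by omega
    have h46 : 4 * G.degree v ≤ 6 * L := by omega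
    rw [ENNReal.div_le_iff (by simp [hLne]) (by finiteness)]
    have hdm : (3:ℝ≥0∞)/4 * (2*L) = (3*(2*(L:ℝ≥0∞)))/4 := by
      rw [div_eq_mul_inv, div_eq_mul_inv]; ring
    rw [hdm, ENNReal.le_div_iff_mul_le (Or.inl (by norm_num)) (Or.inl (by norm_num))]
    calc (G.degree v : ℝ≥0∞) * 4 = ((4 * G.degree v : ℕ) : ℝ≥0∞) := by push_cast; ring
      _ ≤ ((6 * L : ℕ) : ℝ≥0∞) := by exact_mod_cast h46
      _ = 3 * (2 * (L:ℝ≥0∞)) := by push_cast; ring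
  refine ⟨hbound, fun a b hab => ?_⟩
  have hn0 : (Fintype.card V : ℝ≥0∞) ≠ 0 := by
    simp [Fintype.card_ne_zero]
  have hth0 : (θ : ℝ≥0∞) ≠ 0 := by
    exact_mod_cast Nat.cast_ne_zero.mpr hθpos.ne'
  have hfinal : (Fintype.card V : ℝ≥0∞)⁻¹ * (θ : ℝ≥0∞)⁻¹ * (1/3)
      = 1 / (3 * (Fintype.card V : ℝ≥0∞) * (θ : ℝ≥0∞)) := by
    have hinv : (3 * (Fintype.card V : ℝ≥0∞) * (θ : ℝ≥0∞))⁻¹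
        = (3 : ℝ≥0∞)⁻¹ * (Fintype.card V : ℝ≥0∞)⁻¹ * (θ : ℝ≥0∞)⁻¹ := by
      rw [ENNReal.mul_inv (Or.inr (ENNReal.natCast_ne_top _)) (Or.inr hth0),
        ENNReal.mul_inv (Or.inl (by norm_num)) (Or.inr hn0)]
    rw [one_div (3 * (Fintype.card V : ℝ≥0∞) * (θ : ℝ≥0∞)), hinv, one_div]
    ring
  rw [alg1Rejected, PMF.bind_apply]
  refine (tsum_eq_single (some (a, b)) ?_).trans ?_
  · intro o ho
    refine mul_eq_zero.mpr (Or.inr ?_)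
    match o, ho with
    | none, ho => simp
    | some (v, w), ho =>
      have hne : ¬((some (a, b) : Option (V × V)) = some (v, w)) := fun h => ho h.symm
      by_cases hhv : θ < G.degree v
      · simp only [if_pos hhv, PMF.bind_apply, tsum_bool, Bool.false_eq_true, if_false,
          if_true, PMF.pure_apply, if_neg hne, mul_zero, zero_add, add_zero]
        simp [if_neg hne]
      · simp only [if_neg hhv, PMF.pure_apply, if_neg hne]
  · by_cases hda : G.degree a ≤ θ
    · simp only [not_lt.mpr hda, if_false, PMF.pure_apply, if_pos rfl, mul_one]
      rw [alg1_apply_adj' G θ _ nbr hnbr a b hab, if_pos hda, hfinal]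
      simp
    · have hlt := not_le.mp hda
      have hlb := light_bound' G θ hθ2 a hlt
      set L := ((G.neighborFinset a).filter fun x => G.degree x ≤ θ).card with hL
      have hLne : L ≠ 0 := by omega
      have hLne' : (L : ℝ≥0∞) ≠ 0 := by exact_mod_cast Nat.cast_ne_zero.mpr hLne
      have hda0 : (G.degree a : ℝ≥0∞) ≠ 0 := by
        have : G.degree a ≠ 0 := by omega
        exact_mod_cast Nat.cast_ne_zero.mpr this
      have h34 : (3 : ℝ≥0∞) / 4 ≤ 1 := by
        rw [ENNReal.div_le_iff (by norm_num) (by norm_num)]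
        norm_num
      have hp1 : (G.degree a : ℝ≥0∞) / (2 * (L : ℝ≥0∞)) ≤ 1 := (hbound a hlt).trans h34
      have hb' : ∀ p : ℝ≥0∞, p ≤ 1 → bern' p true = p := fun p h => by
        rw [bern', dif_pos h]
        show (PMF.bernoulli p.toNNReal (by have h' := ENNReal.toNNReal_mono ENNReal.one_ne_top h; rwa [ENNReal.toNNReal_one] at h')) true = p
        rw [PMF.bernoulli_apply]
        simp [ENNReal.coe_toNNReal (ne_top_of_le_ne_top ENNReal.one_ne_top h)]
      simp only [if_pos hlt, hb' _ ((hbound a hlt).trans h34), PMF.bind_apply, tsum_bool,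
        Bool.false_eq_true, if_false, if_true, PMF.bernoulli_apply, Bool.cond_false,
        Bool.cond_true, PMF.pure_apply, if_pos rfl, mul_one,
        ENNReal.coe_toNNReal (ne_top_of_le_ne_top ENNReal.one_ne_top hp1)]
      rw [if_neg (by simp : ¬((some (a,b) : Option (V × V)) = none)), mul_zero, zero_add,
        alg1_apply_adj' G θ _ nbr hnbr a b hab, if_neg hda]
      have h2c : (2:ℝ≥0∞) * 2⁻¹ = 1 := ENNReal.mul_inv_cancel (by norm_num) (by norm_num)
      have hdac : (G.degree a : ℝ≥0∞)⁻¹ * (G.degree a : ℝ≥0∞) = 1 :=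
        ENNReal.inv_mul_cancel hda0 (ENNReal.natCast_ne_top _)
      have hLc : (L : ℝ≥0∞) * (L : ℝ≥0∞)⁻¹ = 1 :=
        ENNReal.mul_inv_cancel hLne' (ENNReal.natCast_ne_top _)
      calc (Fintype.card V : ℝ≥0∞)⁻¹ * (θ : ℝ≥0∞)⁻¹ * (2/3) * (G.degree a : ℝ≥0∞)⁻¹ *
            (L : ℝ≥0∞) * ((G.degree a : ℝ≥0∞) / (2 * (L : ℝ≥0∞)))
          = ((Fintype.card V : ℝ≥0∞)⁻¹ * (θ : ℝ≥0∞)⁻¹ * (1/3)) *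
              ((2 * 2⁻¹) * ((G.degree a : ℝ≥0∞)⁻¹ * (G.degree a : ℝ≥0∞)) *
                ((L : ℝ≥0∞) * (L : ℝ≥0∞)⁻¹)) := by
            rw [div_eq_mul_inv (G.degree a : ℝ≥0∞),
              ENNReal.mul_inv (Or.inl (by norm_num)) (Or.inr hLne'),
              div_eq_mul_inv (2:ℝ≥0∞), div_eq_mul_inv (1:ℝ≥0∞)]
            ring
        _ = (Fintype.card V : ℝ≥0∞)⁻¹ * (θ : ℝ≥0∞)⁻¹ * (1/3) := by
            rw [h2c, hdac, hLc]; ring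
        _ = 1 / (3 * (Fintype.card V : ℝ≥0∞) * (θ : ℝ≥0∞)) := hfinal
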